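/- For the cyclic subcategory ΔC of ΔΣ, whose automorphism group of [n] is the cyclic group ℤ/(n+1)ℤ generated by the cycle 0 ↦ 1 ↦ ... ↦ n ↦ 0, the crossed simplicial group property holds: for any g ∈ C_{[n]} = ℤ/(n+1)ℤ and any monotone map φ : [m] → [n], the induced automorphism φ*(g) in ΔΣ (from the unique factorization g ∘ φ = g_*(φ) ∘ φ*(g) with g_*(φ) monotone) again lies in C_{[m]}, i.e. is a power of the standard cycle on {0,...,m}. -/

import Mathlib

/-- The cyclic category `ΔC` is a crossed simplicial group: for a cyclic automorphism
`g = (finRotate)^s` of `[n]` and a monotone map `φ : [m] → [n]`, the automorphism `φ^*(g)`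
of `[m]` arising in the unique factorization `g ∘ φ = g_*(φ) ∘ φ^*(g)` in `ΔΣ` (with
`g_*(φ) = ψ` monotone and `φ^*(g) = g'` a permutation preserving the natural order of the
fibers of `φ`) is again cyclic, i.e. a power of the standard cycle on `{0,…,m}`. -/
theorem cyclic_crossed_simplicial_group (m n s : ℕ) (φ : Fin (m+1) →o Fin (n+1))
    (g' : Equiv.Perm (Fin (m+1))) (ψ : Fin (m+1) →o Fin (n+1))
    (hfact : ∀ a, ψ (g' a) = (finRotate (n+1) ^ s) (φ a))
    (horder : ∀ a b, φ a = φ b → (g' a ≤ g' b ↔ a ≤ b)) :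
    ∃ t : ℕ, g' = finRotate (m+1) ^ t := by
  -- general rotation formula
  open Fin.NatCast in
  have hrot : ∀ (N k : ℕ) (x : Fin (N+1)), ((finRotate (N+1)) ^ k) x = x + (k : Fin (N+1)) := by
    intro N k x
    induction k with
    | zero => simp
    | succ k ih =>
      rw [pow_succ', Equiv.Perm.mul_apply, ih, finRotate_succ_apply, Nat.cast_succ, add_assoc]
  set F : Fin (m+1) → Fin (n+1) := fun a => (finRotate (n+1) ^ s) (φ a) with hF
  have hFinj : ∀ {a b}, F a = F b → φ a = φ b := by
    intro a b h
    exact (finRotate (n+1) ^ s).injective h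
  have hinj : Function.Injective g' := g'.injective
  -- the key order characterization
  have star : ∀ a b, g' a < g' b ↔ (F a < F b ∨ (F a = F b ∧ a < b)) := by
    have back : ∀ a b, (F a < F b ∨ (F a = F b ∧ a < b)) → g' a < g' b := by
      intro a b h
      rcases h with h | ⟨h1, h2⟩
      · have : ¬ g' b ≤ g' a := fun hle => by
          have := ψ.monotone hle
          rw [hfact, hfact] at this
          exact absurd this (not_le.mpr h)
        exact not_le.mp this
      · have hphi : φ a = φ b := hFinj h1
        exact lt_of_le_of_ne ((horder a b hphi).mpr h2.le)
          (fun he => absurd (hinj he) h2.ne)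
    intro a b
    constructor
    · intro h
      rcases lt_trichotomy (F a) (F b) with h1 | h1 | h1
      · exact Or.inl h1
      · rcases lt_trichotomy a b with h2 | h2 | h2
        · exact Or.inr ⟨h1, h2⟩
        · exact absurd h (by rw [h2]; exact lt_irrefl _)
        · exact absurd h (not_lt.mpr (back b a (Or.inr ⟨h1.symm, h2⟩)).le)
      · exact absurd h (not_lt.mpr (back b a (Or.inl h1)).le)
    · exact back a b
  -- natural number version
  set s' := s % (n+1) with hs'
  have hs'lt : s' < n + 1 := Nat.mod_lt _ (Nat.succ_pos n)
  set Fv : Fin (m+1) → ℕ := fun a => (F a).val with hFvdef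
  have hFv : ∀ a, Fv a = if (φ a).val + s' ≤ n then (φ a).val + s' else (φ a).val + s' - (n+1) := by
    intro a
    have h1 : Fv a = ((φ a).val + s') % (n+1) := by
      show ((finRotate (n+1) ^ s) (φ a)).val = _
      rw [hrot, Fin.add_def, Fin.val_natCast]
    have hp : (φ a).val < n + 1 := (φ a).isLt
    rw [h1]
    split
    · exact Nat.mod_eq_of_lt (by omega)
    · rw [Nat.mod_eq_sub_mod (by omega), Nat.mod_eq_of_lt (by omega)]
  have hFvinj : ∀ {a b}, Fv a = Fv b → (φ a).val = (φ b).val := by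
    intro a b h
    exact congrArg Fin.val (hFinj (Fin.val_inj.mp h))
  have star' : ∀ a b, g' a < g' b ↔ (Fv a < Fv b ∨ (Fv a = Fv b ∧ a.val < b.val)) := by
    intro a b
    rw [star a b]
    constructor
    · rintro (h | ⟨h1, h2⟩)
      · exact Or.inl h
      · exact Or.inr ⟨congrArg Fin.val h1, h2⟩
    · rintro (h | ⟨h1, h2⟩)
      · exact Or.inl h
      · exact Or.inr ⟨Fin.val_inj.mp h1, h2⟩
  -- monotonicity helpers
  have hmono' : ∀ {x y : Fin (m+1)}, x.val ≤ y.val → (φ x).val ≤ (φ y).val := by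
    intro x y h
    exact φ.monotone h
  have hmono : ∀ {x y : Fin (m+1)}, (φ x).val < (φ y).val → x.val < y.val := by
    intro x y h
    by_contra hc
    push_neg at hc
    exact absurd (hmono' hc) (by omega)
  -- helper: successor identification
  have succ_of : ∀ (u v : Fin (m+1)), g' u < g' v →
      (∀ x, ¬ (g' u < g' x ∧ g' x < g' v)) → g' v = g' u + 1 := by
    intro u v huv hno
    have hval : (g' u).val < m := by
      have h1 : (g' u).val < (g' v).val := huv
      have h2 : (g' v).val < m + 1 := (g' v).isLt
      omega
    set x := g'.symm (g' u + 1) with hxdef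
    have hx : g' x = g' u + 1 := g'.apply_symm_apply _
    have hvadd : (g' u + 1).val = (g' u).val + 1 :=
      Fin.val_add_one_of_lt (Fin.lt_def.mpr (by simp [Fin.last]; omega))
    have h2 : g' u < g' x := by
      rw [hx]
      exact Fin.lt_def.mpr (by omega)
    have h3 : (g' v).val ≤ (g' x).val := Fin.le_def.mp (not_lt.mp (fun h => hno x ⟨h2, h⟩))
    have h4 : (g' x).val = (g' u).val + 1 := by rw [hx, hvadd]
    have h5 : (g' u).val < (g' v).val := huv
    have : g' v = g' x := Fin.ext (by omega)
    rw [this, hx]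
  have eq_last_of : ∀ u, (∀ x, ¬ g' u < g' x) → g' u = Fin.last m := by
    intro u h
    have h1 := h (g'.symm (Fin.last m))
    rw [g'.apply_symm_apply] at h1
    exact le_antisymm (Fin.le_last _) (not_lt.mp h1)
  have eq_zero_of : ∀ u, (∀ x, ¬ g' x < g' u) → g' u = 0 := by
    intro u h
    have h1 := h (g'.symm 0)
    rw [g'.apply_symm_apply] at h1
    exact le_antisymm (not_lt.mp h1) (Fin.zero_le _)
  -- Lemma A: no-wrap successor step
  have lemA : ∀ a : Fin (m+1), a.val < m → g' (a+1) = g' a + 1 := by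
    intro a ha
    set b := a + 1 with hbdef
    have hbval : b.val = a.val + 1 :=
      Fin.val_add_one_of_lt (Fin.lt_def.mpr (by simp [Fin.last]; omega))
    have hab : a.val < b.val := by omega
    have hpab : (φ a).val ≤ (φ b).val := hmono' (by omega)
    have hfa := hFv a
    have hfb := hFv b
    have hpa : (φ a).val < n + 1 := (φ a).isLt
    have hpb : (φ b).val < n + 1 := (φ b).isLt
    by_cases hcb : (φ b).val + s' ≤ n
    · -- both in block A
      have hca : (φ a).val + s' ≤ n := by omega
      rw [if_pos hca] at hfa
      rw [if_pos hcb] at hfb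
      apply succ_of a b
      · apply (star' a b).mpr
        rcases Nat.lt_or_ge (Fv a) (Fv b) with h | h
        · exact Or.inl h
        · exact Or.inr ⟨by omega, hab⟩
      · rintro x ⟨hx1, hx2⟩
        have h1 := (star' a x).mp hx1
        have h2 := (star' x b).mp hx2
        have hfx := hFv x
        have hpx : (φ x).val < n + 1 := (φ x).isLt
        by_cases hcx : (φ x).val + s' ≤ n
        · rw [if_pos hcx] at hfx
          have hax : a.val < x.val := by
            rcases h1 with h | ⟨he, h⟩
            · exact hmono (by omega)
            · exact h
          have hxb : x.val < b.val := by
            rcases h2 with h | ⟨he, h⟩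
            · exact hmono (by omega)
            · exact h
          omega
        · rw [if_neg hcx] at hfx
          -- x in block B: Fv x < s' ≤ Fv a, contradicting a ≺ x
          rcases h1 with h | ⟨he, h⟩ <;> omega
    · by_cases hca : (φ a).val + s' ≤ n
      · -- wrap case: a in A, b in B
        rw [if_pos hca] at hfa
        rw [if_neg hcb] at hfb
        have hgb : g' b = 0 := by
          apply eq_zero_of
          intro x hx
          have h1 := (star' x b).mp hx
          have hfx := hFv x
          have hpx : (φ x).val < n + 1 := (φ x).isLt
          by_cases hcx : (φ x).val + s' ≤ n
          · rw [if_pos hcx] at hfx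
            -- Fv x ≥ s' > Fv b, so x ≺ b impossible unless eq; eq impossible
            rcases h1 with h | ⟨he, h⟩ <;> omega
          · rw [if_neg hcx] at hfx
            rcases h1 with h | ⟨he, h⟩
            · -- px < pb so x < b, so x ≤ a, so px ≤ pa, contradicting x in B
              have hxb : x.val < b.val := hmono (by omega)
              have : (φ x).val ≤ (φ a).val := hmono' (by omega)
              omega
            · have hpx' : (φ x).val = (φ b).val := hFvinj he
              have : (φ x).val ≤ (φ a).val := hmono' (by omega)
              omega
        have hga : g' a = Fin.last m := by
          apply eq_last_of
          intro x hx
          have h1 := (star' a x).mp hx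
          have hfx := hFv x
          have hpx : (φ x).val < n + 1 := (φ x).isLt
          by_cases hcx : (φ x).val + s' ≤ n
          · rw [if_pos hcx] at hfx
            rcases h1 with h | ⟨he, h⟩
            · -- pa < px so a < x so b ≤ x so pb ≤ px, contra x in A
              have hax : a.val < x.val := hmono (by omega)
              have : (φ b).val ≤ (φ x).val := hmono' (by omega)
              omega
            · have hpx' : (φ a).val = (φ x).val := hFvinj he
              have : (φ b).val ≤ (φ x).val := hmono' (by omega)
              omega
          · rw [if_neg hcx] at hfx
            rcases h1 with h | ⟨he, h⟩ <;> omega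
        rw [hgb, hga]
        exact (Fin.last_add_one m).symm
      · -- both in block B
        push_neg at hca
        rw [if_neg hcb] at hfb
        rw [if_neg (by omega)] at hfa
        apply succ_of a b
        · apply (star' a b).mpr
          rcases Nat.lt_or_ge (Fv a) (Fv b) with h | h
          · exact Or.inl h
          · exact Or.inr ⟨by omega, hab⟩
        · rintro x ⟨hx1, hx2⟩
          have h1 := (star' a x).mp hx1
          have h2 := (star' x b).mp hx2
          have hfx := hFv x
          have hpx : (φ x).val < n + 1 := (φ x).isLt
          by_cases hcx : (φ x).val + s' ≤ n
          · rw [if_pos hcx] at hfx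
            -- x in A: Fv x ≥ s' > Fv b, contradicting x ≺ b
            rcases h2 with h | ⟨he, h⟩ <;> omega
          · rw [if_neg hcx] at hfx
            have hax : a.val < x.val := by
              rcases h1 with h | ⟨he, h⟩
              · exact hmono (by omega)
              · exact h
            have hxb : x.val < b.val := by
              rcases h2 with h | ⟨he, h⟩
              · exact hmono (by omega)
              · exact h
            omega
  -- assemble
  refine ⟨(g' 0).val, ?_⟩
  have key : ∀ k (h : k < m + 1), g' ⟨k, h⟩ = g' 0 + (⟨k, h⟩ : Fin (m+1)) := by
    intro k
    induction k with
    | zero => intro h; simp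
    | succ k ih =>
      intro h
      have hk : k < m + 1 := by omega
      have hklt : (⟨k, hk⟩ : Fin (m+1)) < Fin.last m :=
        Fin.lt_def.mpr (by simpa using (show k < m by omega))
      have hstep : (⟨k+1, h⟩ : Fin (m+1)) = (⟨k, hk⟩ : Fin (m+1)) + 1 := by
        apply Fin.ext
        rw [Fin.val_add_one_of_lt hklt]
      rw [hstep, lemA ⟨k, hk⟩ (by omega), ih hk]
      exact add_assoc _ _ _
  ext x
  have hx : g' x = g' 0 + x := key x.val x.isLt
  simp [hrot m (g' 0).val x, Fin.cast_val_eq_self, hx, add_comm]
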